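/- (Tarama estimate.) Let c : [a,b] → ℝ be of class C² with c(t) ≥ Λ1 > 0, |c'(t)| ≤ γ(t) and |c''(t)| ≤ γ(t)² for all t ∈ [a,b], where γ is a continuous non-negative function, and let λ > 0 satisfy λ ≥ (1/2)|c'(t)|/c(t)^{3/2} for every t ∈ [a,b]. Then for every solution u of u''(t) + λ² c(t) u(t) = 0 on [a,b], the Tarama energy E_Tar(t) = u'(t)²/c(t)^{1/2} + λ² c(t)^{1/2} u(t)² + (1/2)(c'(t)/c(t)^{3/2}) u'(t) u(t) satisfies E_Tar(b) ≤ E_Tar(a)·exp( ((2Λ1+3)/(4Λ1^{5/2}))·(1/λ)·∫_a^b γ(τ)² dτ ). -/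

import Mathlib

open Real Set MeasureTheory

set_option maxHeartbeats 1000000 in
theorem tar_bound_aux (Λ1 lam ct c't c''t γt ut u't : ℝ)
    (hΛ1 : 0 < Λ1) (hlam : 0 < lam) (hc : Λ1 ≤ ct)
    (hd1 : |c't| ≤ γt) (hd2 : |c''t| ≤ γt ^ 2)
    (hlg : (1/2) * |c't| / ct ^ ((3:ℝ)/2) ≤ lam) :
    (1/2) * (c''t / ct ^ ((3:ℝ)/2) - (3/2) * c't^2 / ct ^ ((5:ℝ)/2)) * (u't * ut) ≤
      ((2 * Λ1 + 3) / (4 * Λ1 ^ ((5:ℝ)/2)) * (1 / lam)) * γt ^ 2 *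
        (u't ^ 2 / Real.sqrt ct + lam ^ 2 * Real.sqrt ct * ut ^ 2 +
          (1/2) * (c't / ct ^ ((3:ℝ)/2)) * u't * ut) := by
  have hct : 0 < ct := lt_of_lt_of_le hΛ1 hc
  have hst : 0 < Real.sqrt ct := Real.sqrt_pos.2 hct
  have hγ : 0 ≤ γt := le_trans (abs_nonneg _) hd1
  set s := Real.sqrt ct with hsdef
  have hs2 : s ^ 2 = ct := Real.sq_sqrt hct.le
  set A3 := ct ^ ((3:ℝ)/2) with hA3def
  set A5 := ct ^ ((5:ℝ)/2) with hA5def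
  set B3 := Λ1 ^ ((3:ℝ)/2) with hB3def
  set B5 := Λ1 ^ ((5:ℝ)/2) with hB5def
  have hA3 : (0:ℝ) < A3 := Real.rpow_pos_of_pos hct _
  have hA5 : (0:ℝ) < A5 := Real.rpow_pos_of_pos hct _
  have hB3 : (0:ℝ) < B3 := Real.rpow_pos_of_pos hΛ1 _
  have hB5 : (0:ℝ) < B5 := Real.rpow_pos_of_pos hΛ1 _
  have h35 : B5 = Λ1 * B3 := by
    rw [hB5def, hB3def, show (5:ℝ)/2 = 1 + 3/2 by norm_num, Real.rpow_add hΛ1, Real.rpow_one]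
  have hm3 : B3 ≤ A3 := Real.rpow_le_rpow hΛ1.le hc (by norm_num)
  have hm5 : B5 ≤ A5 := Real.rpow_le_rpow hΛ1.le hc (by norm_num)
  set X := |u't * ut| with hX
  clear_value s A3 A5 B3 B5
  have hXnn : 0 ≤ X := hX ▸ abs_nonneg _
  set Q := u't ^ 2 / s + lam ^ 2 * s * ut ^ 2 with hQ
  clear_value X Q
  have key1 : 2 * lam * X ≤ Q := by
    have hnum : 0 ≤ u't ^ 2 + lam ^ 2 * s ^ 2 * ut ^ 2 - 2 * lam * s * X := by
      rw [hX]
      have e : |2 * lam * s * (u't * ut)| = 2 * lam * s * |u't * ut| := by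
        rw [abs_mul (2 * lam * s) (u't * ut), abs_of_nonneg (by positivity : (0:ℝ) ≤ 2 * lam * s)]
      have h2 : |2 * lam * s * (u't * ut)| ≤ u't ^ 2 + lam ^ 2 * s ^ 2 * ut ^ 2 := by
        apply abs_le.mpr
        constructor <;> nlinarith [sq_nonneg (u't - lam * s * ut), sq_nonneg (u't + lam * s * ut)]
      linarith [e ▸ h2, h2, e.symm.trans_le h2]
    have e2 : Q - 2 * lam * X = (u't ^ 2 + lam ^ 2 * s ^ 2 * ut ^ 2 - 2 * lam * s * X) / s := by
      rw [hQ]; field_simp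
    have := div_nonneg hnum hst.le
    linarith [e2 ▸ this]
  have hcross : |(1/2) * (c't / A3) * u't * ut| ≤ lam * X := by
    have e1 : |(1/2) * (c't / A3) * u't * ut| = |(1/2) * (c't / A3)| * X := by
      rw [mul_assoc, abs_mul, ← hX]
    have e2 : |(1/2) * (c't / A3)| = (1/2) * |c't| / A3 := by
      rw [abs_mul (1/2) (c't / A3), abs_div c't A3, abs_of_pos hA3,
        show |(1/2 : ℝ)| = 1/2 by norm_num, mul_div_assoc]
    rw [e1, e2]
    exact mul_le_mul_of_nonneg_right hlg hXnn
  set E := Q + (1/2) * (c't / A3) * u't * ut with hE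
  clear_value E
  have key2 : Q / 2 ≤ E := by
    have h := neg_abs_le ((1/2) * (c't / A3) * u't * ut)
    linarith
  have hXE : lam * X ≤ E := by linarith
  have hc'2 : c't ^ 2 ≤ γt ^ 2 := by nlinarith [sq_abs c't, abs_nonneg c't]
  have habs2 : |c''t| / A3 ≤ γt ^ 2 / B3 := div_le_div₀ (by positivity) hd2 hB3 hm3
  have habs3 : c't ^ 2 / A5 ≤ γt ^ 2 / B5 := div_le_div₀ (by positivity) hc'2 hB5 hm5
  have hD : (1/2) * (c''t / A3 - (3/2) * c't^2 / A5) * (u't * ut)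
      ≤ (1/2) * (γt ^ 2 / B3 + (3/2) * (γt ^ 2 / B5)) * X := by
    have l1 : (1/2) * (c''t / A3 - (3/2) * c't^2 / A5) * (u't * ut)
        ≤ |(1/2) * (c''t / A3 - (3/2) * c't^2 / A5) * (u't * ut)| := le_abs_self _
    have l2 : |(1/2) * (c''t / A3 - (3/2) * c't^2 / A5) * (u't * ut)|
        = (1/2) * |c''t / A3 - (3/2) * c't^2 / A5| * X := by
      rw [abs_mul, abs_mul (1/2) (c''t / A3 - 3/2 * c't ^ 2 / A5),
        show |(1/2 : ℝ)| = 1/2 by norm_num, ← hX]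
    have l3 : |c''t / A3 - (3/2) * c't^2 / A5| ≤ |c''t| / A3 + (3/2) * (c't ^ 2 / A5) := by
      refine (abs_sub _ _).trans ?_
      have e1 : |c''t / A3| = |c''t| / A3 := by rw [abs_div c''t A3, abs_of_pos hA3]
      have e2 : |(3/2) * c't^2 / A5| = (3/2) * (c't ^ 2 / A5) := by
        rw [abs_div (3/2 * c't ^ 2) A5, abs_of_pos hA5, abs_mul (3/2) (c't ^ 2),
          show |(3/2 : ℝ)| = 3/2 by norm_num, abs_of_nonneg (sq_nonneg c't), mul_div_assoc]
      rw [e1, e2]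
    have l4 : (1/2) * |c''t / A3 - (3/2) * c't^2 / A5| * X
        ≤ (1/2) * (|c''t| / A3 + (3/2) * (c't ^ 2 / A5)) * X := by
      have := mul_le_mul_of_nonneg_right
        (mul_le_mul_of_nonneg_left l3 (by norm_num : (0:ℝ) ≤ 1/2)) hXnn
      linarith
    have l5 : (1/2) * (|c''t| / A3 + (3/2) * (c't ^ 2 / A5)) * X
        ≤ (1/2) * (γt ^ 2 / B3 + (3/2) * (γt ^ 2 / B5)) * X := by
      have h := add_le_add habs2 (mul_le_mul_of_nonneg_left habs3 (by norm_num : (0:ℝ) ≤ 3/2))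
      have := mul_le_mul_of_nonneg_right
        (mul_le_mul_of_nonneg_left h (by norm_num : (0:ℝ) ≤ 1/2)) hXnn
      linarith
    linarith
  have hcoef : (1/2) * (γt ^ 2 / B3 + (3/2) * (γt ^ 2 / B5))
      = ((2 * Λ1 + 3) / (4 * B5) * (1 / lam)) * γt ^ 2 * lam := by
    rw [h35]; field_simp; ring
  have hcf_nn : 0 ≤ (2 * Λ1 + 3) / (4 * B5) * (1 / lam) * γt ^ 2 := by positivity
  have final : ((2 * Λ1 + 3) / (4 * B5) * (1 / lam)) * γt ^ 2 * (lam * X)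
      ≤ ((2 * Λ1 + 3) / (4 * B5) * (1 / lam)) * γt ^ 2 * E :=
    mul_le_mul_of_nonneg_left hXE hcf_nn
  calc (1/2) * (c''t / A3 - (3/2) * c't^2 / A5) * (u't * ut)
      ≤ (1/2) * (γt ^ 2 / B3 + (3/2) * (γt ^ 2 / B5)) * X := hD
    _ = ((2 * Λ1 + 3) / (4 * B5) * (1 / lam)) * γt ^ 2 * (lam * X) := by rw [hcoef]; ring
    _ ≤ ((2 * Λ1 + 3) / (4 * B5) * (1 / lam)) * γt ^ 2 * E := final

/-- The Tarama energy
`E_Tar(t) = u'(t)²/c(t)^{1/2} + λ² c(t)^{1/2} u(t)² + (1/2)(c'(t)/c(t)^{3/2}) u'(t) u(t)`. -/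
noncomputable def tarE (c c' : ℝ → ℝ) (lam : ℝ) (u u' : ℝ → ℝ) (t : ℝ) : ℝ :=
  (u' t) ^ 2 / Real.sqrt (c t) + lam ^ 2 * Real.sqrt (c t) * (u t) ^ 2 +
    (1 / 2) * (c' t / (c t) ^ ((3 : ℝ) / 2)) * u' t * u t

set_option maxHeartbeats 1000000 in
theorem tarama_estimate
    (a b Λ1 lam : ℝ) (hab : a ≤ b) (hΛ1 : 0 < Λ1) (hlam : 0 < lam)
    (c c' c'' γ : ℝ → ℝ)
    (hc1 : ∀ t ∈ Icc a b, HasDerivWithinAt c (c' t) (Icc a b) t)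
    (hc2 : ∀ t ∈ Icc a b, HasDerivWithinAt c' (c'' t) (Icc a b) t)
    (hc2cont : ContinuousOn c'' (Icc a b))
    (hγ_cont : ContinuousOn γ (Icc a b)) (hγ_nonneg : ∀ t ∈ Icc a b, 0 ≤ γ t)
    (hc_lb : ∀ t ∈ Icc a b, Λ1 ≤ c t)
    (hder : ∀ t ∈ Icc a b, |c' t| ≤ γ t ∧ |c'' t| ≤ (γ t) ^ 2)
    (hlam_ge : ∀ t ∈ Icc a b, (1 / 2) * |c' t| / (c t) ^ ((3 : ℝ) / 2) ≤ lam)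
    (u u' : ℝ → ℝ)
    (hu : ∀ t ∈ Icc a b, HasDerivWithinAt u (u' t) (Icc a b) t)
    (hu' : ∀ t ∈ Icc a b, HasDerivWithinAt u' (-(lam ^ 2 * c t * u t)) (Icc a b) t) :
    tarE c c' lam u u' b ≤
      tarE c c' lam u u' a *
        Real.exp ((2 * Λ1 + 3) / (4 * Λ1 ^ ((5 : ℝ) / 2)) * (1 / lam) *
          ∫ τ in a..b, (γ τ) ^ 2) := by
  set K := (2 * Λ1 + 3) / (4 * Λ1 ^ ((5:ℝ)/2)) * (1 / lam) with hKdef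
  set D := fun t => (1/2) * (c'' t / (c t) ^ ((3:ℝ)/2) -
      (3/2) * (c' t)^2 / (c t) ^ ((5:ℝ)/2)) * (u' t * u t) with hDdef
  set G := fun t => ∫ τ in a..t, (γ τ) ^ 2 with hGdef
  -- derivative of the energy
  have hE : ∀ t ∈ Icc a b,
      HasDerivWithinAt (tarE c c' lam u u') (D t) (Icc a b) t := by
    intro t ht
    have hct : 0 < c t := lt_of_lt_of_le hΛ1 (hc_lb t ht)
    have hst : 0 < Real.sqrt (c t) := Real.sqrt_pos.2 hct
    have h32 : (0:ℝ) < (c t) ^ ((3:ℝ)/2) := Real.rpow_pos_of_pos hct _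
    have H1 : HasDerivWithinAt (fun t => (u' t) ^ 2 / Real.sqrt (c t))
        ((2 * u' t ^ 1 * -(lam ^ 2 * c t * u t) * Real.sqrt (c t) -
          (u' t)^2 * (c' t / (2 * Real.sqrt (c t)))) / Real.sqrt (c t) ^ 2) (Icc a b) t :=
      (((hu' t ht).pow 2).div ((hc1 t ht).sqrt hct.ne') hst.ne')
    have H2 : HasDerivWithinAt (fun t => lam ^ 2 * Real.sqrt (c t) * (u t) ^ 2)
        (lam ^ 2 * (c' t / (2 * Real.sqrt (c t))) * (u t) ^ 2 +
          lam ^ 2 * Real.sqrt (c t) * (2 * u t ^ 1 * u' t)) (Icc a b) t :=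
      (((hc1 t ht).sqrt hct.ne').const_mul (lam ^ 2)).mul ((hu t ht).pow 2)
    have Hr : HasDerivWithinAt (fun t => (c t) ^ ((3:ℝ)/2))
        (c' t * ((3:ℝ)/2) * (c t) ^ ((3:ℝ)/2 - 1)) (Icc a b) t :=
      (hc1 t ht).rpow_const (Or.inl hct.ne')
    have H3 : HasDerivWithinAt
        (fun t => (1 / 2) * (c' t / (c t) ^ ((3 : ℝ) / 2)) * u' t * u t)
        ((((c'' t * (c t) ^ ((3:ℝ)/2) - c' t * (c' t * ((3:ℝ)/2) * (c t) ^ ((3:ℝ)/2 - 1))) /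
            ((c t) ^ ((3:ℝ)/2)) ^ 2) * (1/2) * u' t +
            (1 / 2) * (c' t / (c t) ^ ((3 : ℝ) / 2)) * -(lam ^ 2 * c t * u t)) * u t +
          (1 / 2) * (c' t / (c t) ^ ((3 : ℝ) / 2)) * u' t * u' t) (Icc a b) t :=
      (((((hc2 t ht).div Hr h32.ne').mul_const (1/2)).congr_deriv rfl
        |>.congr (fun x _ => by simp only [Pi.div_apply]; ring) (by simp only [Pi.div_apply]; ring)).mul (hu' t ht)).mul (hu t ht)
    have H := (H1.add H2).add H3
    refine H.congr_deriv ?_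
    symm
    have hs2 : Real.sqrt (c t) ^ 2 = c t := Real.sq_sqrt hct.le
    have e0 : (c t) ^ ((3:ℝ)/2 - 1) = Real.sqrt (c t) := by
      rw [show (3:ℝ)/2 - 1 = 1/2 by norm_num, ← Real.sqrt_eq_rpow]
    have e3 : (c t) ^ ((3:ℝ)/2) = Real.sqrt (c t) ^ 3 := by
      rw [show ((3:ℝ)/2) = (1/2 : ℝ) * (3:ℕ) by norm_num, Real.rpow_mul hct.le,
        ← Real.sqrt_eq_rpow, Real.rpow_natCast]
    have e5 : (c t) ^ ((5:ℝ)/2) = Real.sqrt (c t) ^ 5 := by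
      rw [show ((5:ℝ)/2) = (1/2 : ℝ) * (5:ℕ) by norm_num, Real.rpow_mul hct.le,
        ← Real.sqrt_eq_rpow, Real.rpow_natCast]
    rw [hDdef]
    simp only []
    rw [e0, e3, e5]
    have hsne : Real.sqrt (c t) ≠ 0 := hst.ne'
    field_simp
    linear_combination (-(2 * Real.sqrt (c t)^2 * c' t * u t^2 * lam^2 + 8 * Real.sqrt (c t)^4 * u' t * u t * lam^2)) * hs2
  -- derivative of the integral of γ²
  have hγ2cont : ContinuousOn (fun τ => (γ τ) ^ 2) (Icc a b) := hγ_cont.pow 2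
  have hGd : ∀ t ∈ Icc a b, HasDerivWithinAt G ((γ t) ^ 2) (Icc a b) t := by
    intro t ht
    haveI : Fact (t ∈ Icc a b) := ⟨ht⟩
    have hint : IntervalIntegrable (fun τ => (γ τ) ^ 2) volume a t := by
      apply ContinuousOn.intervalIntegrable
      apply hγ2cont.mono
      rw [uIcc_of_le ht.1]
      exact Icc_subset_Icc le_rfl ht.2
    exact intervalIntegral.integral_hasDerivWithinAt_right hint
      (hγ2cont.stronglyMeasurableAtFilter_nhdsWithin measurableSet_Icc t)
      (hγ2cont t ht)
  -- the damped energy F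
  set F := fun t => tarE c c' lam u u' t * Real.exp (-(K * G t)) with hFdef
  set Fd := fun t => D t * Real.exp (-(K * G t)) +
      tarE c c' lam u u' t * (Real.exp (-(K * G t)) * (-(K * (γ t) ^ 2))) with hFddef
  have hFd : ∀ t ∈ Icc a b, HasDerivWithinAt F (Fd t) (Icc a b) t := by
    intro t ht
    exact (hE t ht).mul (((hGd t ht).const_mul K).neg.exp)
  have hKnn : 0 ≤ K := by
    rw [hKdef]
    have : (0:ℝ) < Λ1 ^ ((5:ℝ)/2) := Real.rpow_pos_of_pos hΛ1 _
    positivity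
  -- F' ≤ 0
  have hnonpos : ∀ t ∈ Icc a b, Fd t ≤ 0 := by
    intro t ht
    have hb := tar_bound_aux Λ1 lam (c t) (c' t) (c'' t) (γ t) (u t) (u' t)
      hΛ1 hlam (hc_lb t ht) (hder t ht).1 (hder t ht).2 (hlam_ge t ht)
    have hDle : D t ≤ K * (γ t) ^ 2 * tarE c c' lam u u' t := by
      rw [hDdef, hKdef]
      simpa [tarE] using hb
    have he := Real.exp_pos (-(K * G t))
    rw [hFddef]
    simp only []
    nlinarith [mul_nonneg (sub_nonneg.2 hDle) he.le]
  -- F is antitone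
  have hFc : ContinuousOn F (Icc a b) := fun t ht => (hFd t ht).continuousWithinAt
  have hanti : AntitoneOn F (Icc a b) :=
    antitoneOn_of_hasDerivWithinAt_nonpos (convex_Icc a b) hFc
      (fun x hx => (hFd x (interior_subset hx)).mono interior_subset)
      (fun x hx => hnonpos x (interior_subset hx))
  have hFba : F b ≤ F a := hanti (left_mem_Icc.2 hab) (right_mem_Icc.2 hab) hab
  have hGa : G a = 0 := intervalIntegral.integral_same
  have hFa : F a = tarE c c' lam u u' a := by
    rw [hFdef]; simp only []; rw [hGa]; simp
  have hmul := mul_le_mul_of_nonneg_right hFba (Real.exp_pos (K * G b)).le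
  have hFb : F b * Real.exp (K * G b) = tarE c c' lam u u' b := by
    rw [hFdef]; simp only []
    rw [mul_assoc, ← Real.exp_add]
    simp
  rw [hFa] at hmul
  rw [hFb] at hmul
  exact hmul
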